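/- Let v and w be points in ℝ² with |v − w| = x ≤ 1, and suppose the closed unit disk C(v) around v lies entirely in a region R. If a point p is sampled uniformly at random from C(v), then the probability that p ∉ C(w) equals (1/π)(π − 2(arccos(x/2) − (1/2)·sin(2·arccos(x/2)))). -/

import Mathlib

set_option maxHeartbeats 1000000


open Real MeasureTheory Metric

private lemma slice_vol (x a : ℝ) (hx0 : 0 < x) :
    volume {b : ℝ | a ^ 2 + b ^ 2 ≤ 1 ∧ a ^ 2 + (b - x) ^ 2 ≤ 1} =
      ENNReal.ofReal (2 * Real.sqrt (1 - a ^ 2) - x) := by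
  rcases le_or_gt (a ^ 2) 1 with ha | ha
  · set r := Real.sqrt (1 - a ^ 2) with hr
    have hr0 : 0 ≤ r := Real.sqrt_nonneg _
    have key : ∀ c : ℝ, |c| ≤ r ↔ c ^ 2 ≤ 1 - a ^ 2 := fun c => by
      rw [hr, Real.le_sqrt (abs_nonneg c) (by linarith), sq_abs]
    have hset : {b : ℝ | a ^ 2 + b ^ 2 ≤ 1 ∧ a ^ 2 + (b - x) ^ 2 ≤ 1} =
        Set.Icc (-r) r ∩ Set.Icc (x - r) (x + r) := by
      ext b
      simp only [Set.mem_setOf_eq, Set.mem_inter_iff, Set.mem_Icc]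
      constructor
      · rintro ⟨h1, h2⟩
        have hb := abs_le.1 ((key b).2 (by linarith))
        have hbx := abs_le.1 ((key (b - x)).2 (by linarith))
        exact ⟨⟨by linarith [hb.1], by linarith [hb.2]⟩,
          ⟨by linarith [hbx.1], by linarith [hbx.2]⟩⟩
      · rintro ⟨⟨h1, h2⟩, ⟨h3, h4⟩⟩
        have hb := (key b).1 (abs_le.2 ⟨h1, h2⟩)
        have hbx := (key (b - x)).1 (abs_le.2 ⟨by linarith, by linarith⟩)
        exact ⟨by linarith, by linarith⟩
    rw [hset, Set.Icc_inter_Icc, Real.volume_Icc]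
    rw [max_eq_right (by linarith : -r ≤ x - r), min_eq_left (by linarith : r ≤ x + r)]
    congr 1
    ring
  · have hempty : {b : ℝ | a ^ 2 + b ^ 2 ≤ 1 ∧ a ^ 2 + (b - x) ^ 2 ≤ 1} = ∅ := by
      ext b
      simp only [Set.mem_setOf_eq, Set.mem_empty_iff_false, iff_false, not_and]
      intro h
      nlinarith [sq_nonneg b]
    rw [hempty, measure_empty]
    symm
    rw [ENNReal.ofReal_eq_zero]
    have : Real.sqrt (1 - a ^ 2) = 0 := Real.sqrt_eq_zero'.2 (by linarith)
    rw [this]; linarith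

private lemma lens_lintegral (x : ℝ) (hx0 : 0 < x) (hx1 : x ≤ 1) :
    (∫⁻ a : ℝ, ENNReal.ofReal (2 * Real.sqrt (1 - a ^ 2) - x)) =
      ENNReal.ofReal (2 * Real.arccos (x / 2) - Real.sin (2 * Real.arccos (x / 2))) := by
  have hsx : (0:ℝ) ≤ 1 - x ^ 2 / 4 := by nlinarith
  set s := Real.sqrt (1 - x ^ 2 / 4) with hs
  have hs0 : 0 ≤ s := Real.sqrt_nonneg _
  have hssq : s ^ 2 = 1 - x ^ 2 / 4 := Real.sq_sqrt hsx
  have hs1 : s < 1 := by nlinarith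
  have hxhalf : Real.sqrt (x ^ 2 / 4) = x / 2 := by
    rw [show x ^ 2 / 4 = (x / 2) ^ 2 by ring, Real.sqrt_sq (by linarith)]
  have hind : ∀ a : ℝ, ENNReal.ofReal (2 * Real.sqrt (1 - a ^ 2) - x)
      = Set.indicator (Set.Icc (-s) s)
          (fun a => ENNReal.ofReal (2 * Real.sqrt (1 - a ^ 2) - x)) a := by
    intro a
    by_cases ha : a ∈ Set.Icc (-s) s
    · rw [Set.indicator_of_mem ha]
    · rw [Set.indicator_of_notMem ha, ENNReal.ofReal_eq_zero]
      have ha2 : s ^ 2 ≤ a ^ 2 := by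
        simp only [Set.mem_Icc, not_and_or, not_le] at ha
        rcases ha with h | h <;> nlinarith
      have h1 : 1 - a ^ 2 ≤ x ^ 2 / 4 := by nlinarith
      have h2 := Real.sqrt_le_sqrt h1
      rw [hxhalf] at h2
      linarith
  have hcont : Continuous fun a : ℝ => 2 * Real.sqrt (1 - a ^ 2) - x :=
    (continuous_const.mul ((continuous_const.sub (continuous_pow 2)).sqrt)).sub continuous_const
  have hint : IntegrableOn (fun a : ℝ => 2 * Real.sqrt (1 - a ^ 2) - x) (Set.Icc (-s) s) :=
    hcont.integrableOn_Icc
  have hnn : 0 ≤ᶠ[ae (volume.restrict (Set.Icc (-s) s))]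
      fun a : ℝ => 2 * Real.sqrt (1 - a ^ 2) - x := by
    refine (ae_restrict_iff' measurableSet_Icc).2 (ae_of_all _ ?_)
    intro a ha
    have ha2 : a ^ 2 ≤ s ^ 2 := sq_le_sq' ha.1 ha.2
    have h1 : x ^ 2 / 4 ≤ 1 - a ^ 2 := by nlinarith
    have h2 := Real.sqrt_le_sqrt h1
    rw [hxhalf] at h2
    simp only [Pi.zero_apply]
    linarith
  calc (∫⁻ a : ℝ, ENNReal.ofReal (2 * Real.sqrt (1 - a ^ 2) - x))
      = ∫⁻ a : ℝ, Set.indicator (Set.Icc (-s) s)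
          (fun a => ENNReal.ofReal (2 * Real.sqrt (1 - a ^ 2) - x)) a :=
        lintegral_congr hind
    _ = ∫⁻ a : ℝ in Set.Icc (-s) s, ENNReal.ofReal (2 * Real.sqrt (1 - a ^ 2) - x) :=
        lintegral_indicator measurableSet_Icc _
    _ = ENNReal.ofReal (∫ a : ℝ in Set.Icc (-s) s, (2 * Real.sqrt (1 - a ^ 2) - x)) :=
        (MeasureTheory.ofReal_integral_eq_lintegral_ofReal hint hnn).symm
    _ = ENNReal.ofReal (2 * Real.arccos (x / 2) - Real.sin (2 * Real.arccos (x / 2))) := by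
        congr 1
        rw [MeasureTheory.integral_Icc_eq_integral_Ioc,
          ← intervalIntegral.integral_of_le (by linarith : -s ≤ s)]
        have hderiv : ∀ a ∈ Set.uIcc (-s) s,
            HasDerivAt (fun a : ℝ => Real.arcsin a + (a * Real.sqrt (1 - a ^ 2) - x * a))
              (2 * Real.sqrt (1 - a ^ 2) - x) a := by
          intro a ha
          rw [Set.uIcc_of_le (by linarith : -s ≤ s), Set.mem_Icc] at ha
          have haa : a ^ 2 < 1 := by nlinarith [sq_le_sq' ha.1 ha.2]
          have hpos : 0 < 1 - a ^ 2 := by linarith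
          have hsq : 0 < Real.sqrt (1 - a ^ 2) := Real.sqrt_pos.2 hpos
          have hsqsq : Real.sqrt (1 - a ^ 2) ^ 2 = 1 - a ^ 2 := Real.sq_sqrt hpos.le
          have h1 : HasDerivAt Real.arcsin (1 / Real.sqrt (1 - a ^ 2)) a :=
            Real.hasDerivAt_arcsin (by nlinarith) (by nlinarith)
          have h2 : HasDerivAt (fun a : ℝ => 1 - a ^ 2) (-(2 * a)) a := by
            have := (hasDerivAt_pow 2 a).const_sub 1
            simpa using this
          have h3 : HasDerivAt (fun a : ℝ => Real.sqrt (1 - a ^ 2))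
              (-(2 * a) / (2 * Real.sqrt (1 - a ^ 2))) a := h2.sqrt hpos.ne'
          have h4 : HasDerivAt (fun a : ℝ => a * Real.sqrt (1 - a ^ 2))
              (1 * Real.sqrt (1 - a ^ 2) + a * (-(2 * a) / (2 * Real.sqrt (1 - a ^ 2)))) a :=
            (hasDerivAt_id a).mul h3
          have h5 : HasDerivAt (fun a : ℝ => x * a) (x * 1) a := (hasDerivAt_id a).const_mul x
          have h6 := h1.add (h4.sub h5)
          refine h6.congr_deriv ?_
          field_simp
          nlinarith [hsqsq, hsq]
        rw [intervalIntegral.integral_eq_sub_of_hasDerivAt hderiv (hcont.intervalIntegrable _ _)]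
        have hsin : Real.sin (Real.arccos (x / 2)) = s := by
          rw [Real.sin_arccos, hs]
          congr 1
          ring
        have hcos : Real.cos (Real.arccos (x / 2)) = x / 2 :=
          Real.cos_arccos (by linarith) (by linarith)
        have harcsin : Real.arcsin s = Real.arccos (x / 2) := by
          rw [← hsin, Real.arcsin_sin]
          · linarith [Real.arccos_nonneg (x / 2), Real.pi_pos]
          · exact Real.arccos_le_pi_div_two.2 (by linarith)
        have hsub : Real.sqrt (1 - s ^ 2) = x / 2 := by
          rw [hssq, show (1:ℝ) - (1 - x ^ 2 / 4) = x ^ 2 / 4 by ring, hxhalf]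
        have hsin2 : Real.sin (2 * Real.arccos (x / 2)) = x * s := by
          rw [Real.sin_two_mul, hsin, hcos]; ring
        rw [Real.arcsin_neg, neg_sq, harcsin, hsub, hsin2]
        ring

private lemma lens_area (x : ℝ) (hx0 : 0 < x) (hx1 : x ≤ 1) :
    volume {p : ℝ × ℝ | p.1 ^ 2 + p.2 ^ 2 ≤ 1 ∧ p.1 ^ 2 + (p.2 - x) ^ 2 ≤ 1} =
      ENNReal.ofReal (2 * Real.arccos (x / 2) - Real.sin (2 * Real.arccos (x / 2))) := by
  have hmeas : MeasurableSet {p : ℝ × ℝ | p.1 ^ 2 + p.2 ^ 2 ≤ 1 ∧ p.1 ^ 2 + (p.2 - x) ^ 2 ≤ 1} := by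
    rw [Set.setOf_and]
    exact ((isClosed_le (by fun_prop) continuous_const).measurableSet).inter
      ((isClosed_le (by fun_prop) continuous_const).measurableSet)
  rw [MeasureTheory.Measure.volume_eq_prod, Measure.prod_apply hmeas]
  calc (∫⁻ a : ℝ, volume (Prod.mk a ⁻¹'
        {p : ℝ × ℝ | p.1 ^ 2 + p.2 ^ 2 ≤ 1 ∧ p.1 ^ 2 + (p.2 - x) ^ 2 ≤ 1}))
      = ∫⁻ a : ℝ, ENNReal.ofReal (2 * Real.sqrt (1 - a ^ 2) - x) := by
        refine lintegral_congr fun a => ?_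
        have : Prod.mk a ⁻¹' {p : ℝ × ℝ | p.1 ^ 2 + p.2 ^ 2 ≤ 1 ∧ p.1 ^ 2 + (p.2 - x) ^ 2 ≤ 1}
            = {b : ℝ | a ^ 2 + b ^ 2 ≤ 1 ∧ a ^ 2 + (b - x) ^ 2 ≤ 1} := rfl
        rw [this, slice_vol x a hx0]
    _ = ENNReal.ofReal (2 * Real.arccos (x / 2) - Real.sin (2 * Real.arccos (x / 2))) :=
        lens_lintegral x hx0 hx1

private lemma lens_transfer (v w : EuclideanSpace ℝ (Fin 2)) (x : ℝ)
    (hx : dist v w = x) (hx0 : 0 ≤ x) :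
    volume (closedBall v 1 ∩ closedBall w 1) =
      volume {p : ℝ × ℝ | p.1 ^ 2 + p.2 ^ 2 ≤ 1 ∧ p.1 ^ 2 + (p.2 - x) ^ 2 ≤ 1} := by
  set u : EuclideanSpace ℝ (Fin 2) := w - v with hudef
  set e : EuclideanSpace ℝ (Fin 2) := EuclideanSpace.single (1 : Fin 2) x with hedef
  have hu : ‖u‖ = x := by rw [hudef, ← dist_eq_norm, dist_comm, hx]
  have he : ‖e‖ = x := by
    rw [hedef, EuclideanSpace.norm_single, Real.norm_eq_abs, abs_of_nonneg hx0]
  set f := Submodule.reflection (Submodule.span ℝ {u - e})ᗮ with hfdef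
  have hfu : f u = e := Submodule.reflection_sub (by rw [hu, he])
  have hfe : f e = u := by rw [← hfu, hfdef, Submodule.reflection_reflection]
  have hmp : MeasurePreserving (fun p : EuclideanSpace ℝ (Fin 2) => f p + v) volume volume :=
    (measurePreserving_add_right volume v).comp f.measurePreserving
  have hpre : (fun p : EuclideanSpace ℝ (Fin 2) => f p + v) ⁻¹'
      (closedBall v 1 ∩ closedBall w 1) = closedBall 0 1 ∩ closedBall e 1 := by
    ext p
    have hw : u + v = w := by rw [hudef]; abel
    have h1 : dist (f p + v) v = ‖p‖ := by
      rw [dist_eq_norm, add_sub_cancel_right, f.norm_map]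
    have h2 : dist (f p + v) w = dist p e := by
      rw [← hw, dist_add_right, ← hfe, f.dist_map]
    simp only [Set.mem_preimage, Set.mem_inter_iff, mem_closedBall, h1, h2, dist_zero_right]
  have step1 : volume (closedBall v 1 ∩ closedBall w 1) =
      volume (closedBall (0 : EuclideanSpace ℝ (Fin 2)) 1 ∩ closedBall e 1) := by
    have h := hmp.measure_preimage
      (s := closedBall v 1 ∩ closedBall w 1)
      ((measurableSet_closedBall.inter measurableSet_closedBall).nullMeasurableSet)
    rw [hpre] at h
    exact h.symm
  have hmp2 : MeasurePreserving
      (fun q : EuclideanSpace ℝ (Fin 2) =>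
        MeasurableEquiv.finTwoArrow ((MeasurableEquiv.toLp 2 (Fin 2 → ℝ)).symm q)) volume volume :=
    (volume_preserving_finTwoArrow ℝ).comp (EuclideanSpace.volume_preserving_symm_measurableEquiv_toLp (Fin 2))
  have hmeas : MeasurableSet {p : ℝ × ℝ | p.1 ^ 2 + p.2 ^ 2 ≤ 1 ∧ p.1 ^ 2 + (p.2 - x) ^ 2 ≤ 1} := by
    rw [Set.setOf_and]
    exact ((isClosed_le (by fun_prop) continuous_const).measurableSet).inter
      ((isClosed_le (by fun_prop) continuous_const).measurableSet)
  have hpre2 : (fun q : EuclideanSpace ℝ (Fin 2) =>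
        MeasurableEquiv.finTwoArrow ((MeasurableEquiv.toLp 2 (Fin 2 → ℝ)).symm q)) ⁻¹'
      {p : ℝ × ℝ | p.1 ^ 2 + p.2 ^ 2 ≤ 1 ∧ p.1 ^ 2 + (p.2 - x) ^ 2 ≤ 1}
      = closedBall 0 1 ∩ closedBall e 1 := by
    ext q
    have happ : MeasurableEquiv.finTwoArrow ((MeasurableEquiv.toLp 2 (Fin 2 → ℝ)).symm q)
        = (q 0, q 1) := by
      simp [MeasurableEquiv.finTwoArrow]
    have he0 : e 0 = 0 := by rw [hedef, EuclideanSpace.single_apply]; norm_num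
    have he1 : e 1 = x := by rw [hedef, EuclideanSpace.single_apply]; norm_num
    have hq1 : dist q 0 ≤ 1 ↔ (q 0) ^ 2 + (q 1) ^ 2 ≤ 1 := by
      rw [EuclideanSpace.dist_eq, Real.sqrt_le_one]
      simp [Fin.sum_univ_two, Real.dist_eq, sq_abs]
    have hq2 : dist q e ≤ 1 ↔ (q 0) ^ 2 + (q 1 - x) ^ 2 ≤ 1 := by
      rw [EuclideanSpace.dist_eq, Real.sqrt_le_one]
      simp [Fin.sum_univ_two, Real.dist_eq, sq_abs, he0, he1]
    simp only [Set.mem_preimage, happ, Set.mem_setOf_eq, Set.mem_inter_iff, mem_closedBall]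
    rw [hq1, hq2]
  rw [step1, ← hpre2]
  exact hmp2.measure_preimage hmeas.nullMeasurableSet

theorem prob_not_in_neighbor_disk
    (R : Set (EuclideanSpace ℝ (Fin 2)))
    (v w : EuclideanSpace ℝ (Fin 2)) (x : ℝ)
    (hx : dist v w = x) (hx1 : x ≤ 1)
    (hR : closedBall v 1 ⊆ R) :
    (volume (closedBall v 1 \ closedBall w 1)).toReal / π =
      (1 / π) * (π - 2 * (arccos (x / 2) - (1 / 2) * sin (2 * arccos (x / 2)))) := by
  have hx0 : 0 ≤ x := hx ▸ dist_nonneg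
  rcases eq_or_lt_of_le hx0 with h0 | h0
  · -- x = 0 case
    have hvw : v = w := by
      rw [← dist_eq_zero, hx, ← h0]
    rw [hvw, Set.diff_self, measure_empty, ENNReal.toReal_zero, zero_div, ← h0,
      show (0:ℝ) / 2 = 0 by norm_num, Real.arccos_zero,
      show 2 * (π / 2) = π by ring, Real.sin_pi]
    ring
  · -- 0 < x case
    have hA := (lens_transfer v w x hx hx0).trans (lens_area x h0 hx1)
    set θ := Real.arccos (x / 2) with hθ
    have hθ0 : 0 ≤ θ := Real.arccos_nonneg _
    have hθπ : θ ≤ π / 2 := Real.arccos_le_pi_div_two.2 (by linarith)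
    have hA0 : 0 ≤ 2 * θ - Real.sin (2 * θ) := by
      have := Real.sin_le (by linarith : 0 ≤ 2 * θ)
      linarith
    have hAπ : 2 * θ - Real.sin (2 * θ) ≤ π := by
      have := Real.sin_nonneg_of_nonneg_of_le_pi (by linarith : 0 ≤ 2 * θ)
        (by linarith : 2 * θ ≤ π)
      linarith
    have hball : volume (closedBall v 1) = ENNReal.ofReal π := by
      rw [EuclideanSpace.volume_closedBall]
      rw [show ((Fintype.card (Fin 2) : ℝ)) / 2 + 1 = 2 by simp; norm_num]
      rw [Real.Gamma_two, Fintype.card_fin]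
      rw [Real.sq_sqrt Real.pi_pos.le]
      simp
    have hvol : volume (closedBall v 1 \ closedBall w 1)
        = ENNReal.ofReal (π - (2 * θ - Real.sin (2 * θ))) := by
      rw [← Set.diff_self_inter,
        measure_diff Set.inter_subset_left
          ((measurableSet_closedBall.inter measurableSet_closedBall).nullMeasurableSet)
          (by rw [hA]; exact ENNReal.ofReal_ne_top),
        hA, hball, ← ENNReal.ofReal_sub _ hA0]
    rw [hvol, ENNReal.toReal_ofReal (by linarith)]
    ring
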